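/- Any two simple closed curves on a surface that intersect at most k times (k ≥ 1) are at distance at most 2·log₂(k) + 2 in the curve graph of the surface. Abstract version: if a graph G on a set of curves has the property that curves intersecting at most once are adjacent, and a surgery reduces intersection number from k to at most ⌈k/2⌉ while moving distance at most 2, then curves intersecting at most k times are at distance at most 2·log₂(k) + 2. -/
import Mathlib


/-- abstract surgery argument: if curves intersecting at most once are
at distance at most 2, and surgery reduces intersection number from `k ≥ 2` to at most
`⌈k/2⌉` while moving distance at most 2, then curves intersecting at most `k ≥ 1` times
are at distance at most `2⌈log₂ k⌉ + 2`. -/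
theorem curve_graph_log_distance_bound {V : Type*} (d : V → V → ℕ) (i : V → V → ℕ)
    (hsymm : ∀ α β, d α β = d β α)
    (htri : ∀ α β γ, d α γ ≤ d α β + d β γ)
    (hbase : ∀ α β, i α β ≤ 1 → d α β ≤ 2)
    (hsurg : ∀ α β, 2 ≤ i α β → ∃ γ, i α γ ≤ (i α β + 1) / 2 ∧ d γ β ≤ 2) :
    ∀ k : ℕ, 1 ≤ k → ∀ α β, i α β ≤ k → d α β ≤ 2 * Nat.clog 2 k + 2 := by
  intro k
  induction k using Nat.strong_induction_on with
  | _ k ih =>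
    intro hk α β hiab
    by_cases h1 : i α β ≤ 1
    · exact le_trans (hbase α β h1) (by omega)
    · push_neg at h1
      have hk2 : 2 ≤ k := by omega
      obtain ⟨γ, hiγ, hdγ⟩ := hsurg α β h1
      have hiγ' : i α γ ≤ (k + 1) / 2 := le_trans hiγ (by omega)
      have hlt : (k + 1) / 2 < k := by omega
      have h1' : 1 ≤ (k + 1) / 2 := by omega
      have hrec := ih _ hlt h1' α γ hiγ'
      have hclog : Nat.clog 2 k = Nat.clog 2 ((k + 1) / 2) + 1 := by
        rw [Nat.clog_of_two_le (by norm_num) hk2]; norm_num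
      calc d α β ≤ d α γ + d γ β := htri α γ β
        _ ≤ (2 * Nat.clog 2 ((k + 1) / 2) + 2) + 2 := by omega
        _ = 2 * Nat.clog 2 k + 2 := by omega
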